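/- Let Q be an M×M invertible 0-1 matrix in which every row has exactly two 1 entries. Then every entry of Q⁻¹ lies in the set {0, ±1/2, ±1}. -/

import Mathlib

open Finset Matrix

lemma rowsum (V : Type) [Fintype V] [DecidableEq V] (g f : V → ℚ)
    (h01 : ∀ v, g v = 0 ∨ g v = 1) :
    ∑ v, g v * f v = ∑ v ∈ Finset.univ.filter (fun v => g v = 1), f v := by
  rw [Finset.sum_filter]
  apply Finset.sum_congr rfl
  intro v _
  rcases h01 v with h | h <;> simp [h]

lemma rowsum_pair (V : Type) [Fintype V] [DecidableEq V] (g f : V → ℚ)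
    (h01 : ∀ v, g v = 0 ∨ g v = 1) {a b : V} (hab : a ≠ b)
    (hsupp : Finset.univ.filter (fun v => g v = 1) = {a, b}) :
    ∑ v, g v * f v = f a + f b := by
  rw [rowsum V g f h01, hsupp, Finset.sum_pair hab]

lemma sum_split (V : Type) [Fintype V] [DecidableEq V] (s : Finset V) (f : V → ℚ) :
    ∑ v, f v = (∑ v : {v // v ∉ s}, f v.val) + ∑ v ∈ s, f v := by
  have h1 : (∑ v : {v // v ∉ s}, f v.val) = ∑ v ∈ Finset.univ.filter (fun v => v ∉ s), f v := by
    rw [Finset.sum_subtype (p := fun v => v ∉ s) (Finset.univ.filter (fun v => v ∉ s)) (by simp) f]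
  rw [h1, ← Finset.sum_filter_add_sum_filter_not Finset.univ (fun v => v ∈ s)]
  rw [add_comm]
  congr 1
  rw [Finset.filter_mem_eq_inter, Finset.univ_inter]

lemma card_filter_subtype (V : Type) [Fintype V] [DecidableEq V] (s : Finset V)
    (p : V → Prop) [DecidablePred p] (h : ∀ v ∈ s, ¬ p v) :
    (Finset.univ.filter (fun v : {v // v ∉ s} => p v.val)).card
      = (Finset.univ.filter p).card := by
  apply Finset.card_bij (fun v _ => v.val)
  · intro c hc; simp only [Finset.mem_filter, Finset.mem_univ, true_and] at hc ⊢; exact hc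
  · intro c₁ _ c₂ _ hh; exact Subtype.ext hh
  · intro c hc
    simp only [Finset.mem_filter, Finset.mem_univ, true_and] at hc
    exact ⟨⟨c, fun hm => h c hm hc⟩, by simp [hc], rfl⟩

lemma filter_subtype_pair (V : Type) [Fintype V] [DecidableEq V] (s : Finset V)
    (p : V → Prop) [DecidablePred p] {a b : V} (ha : a ∉ s) (hb : b ∉ s)
    (hsupp : Finset.univ.filter p = {a, b}) :
    Finset.univ.filter (fun v : {v // v ∉ s} => p v.val) = {⟨a, ha⟩, ⟨b, hb⟩} := by
  ext ⟨c, hc⟩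
  have := Finset.ext_iff.mp hsupp c
  simp only [Finset.mem_filter, Finset.mem_univ, true_and, Finset.mem_insert,
    Finset.mem_singleton] at this ⊢
  rw [this]
  constructor
  · rintro (h | h) <;> [left; right] <;> exact Subtype.ext h
  · rintro (h | h) <;> [left; right] <;> exact congrArg Subtype.val h

lemma card_subtype_not_mem (V : Type) [Fintype V] [DecidableEq V] (s : Finset V) :
    Fintype.card {v // v ∉ s} = Fintype.card V - s.card := by
  rw [Fintype.card_subtype_compl (fun v => v ∈ s)]
  congr 1
  exact Fintype.card_coe s

lemma subsum (V : Type) [Fintype V] [DecidableEq V] (s : Finset V) (g : V → ℚ)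
    (h0 : ∀ c ∈ s, g c = 0) (f : V → ℚ) :
    ∑ c : {c // c ∉ s}, g c.val * f c.val = ∑ c, g c * f c := by
  have h2 : ∑ v ∈ s, g v * f v = 0 :=
    Finset.sum_eq_zero (fun c hc => by rw [h0 c hc]; ring)
  have h3 := sum_split V s (fun c => g c * f c)
  rw [h2, add_zero] at h3
  exact h3.symm

lemma Sneg {t : ℚ} (h : t ∈ ({0, 1/2, -(1/2), 1, -1} : Set ℚ)) :
    -t ∈ ({0, 1/2, -(1/2), 1, -1} : Set ℚ) := by
  simp only [Set.mem_insert_iff, Set.mem_singleton_iff] at h ⊢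
  rcases h with h | h | h | h | h <;> rw [h] <;> norm_num

lemma pair_other (V : Type) [Fintype V] [DecidableEq V] (p : V → Prop) [DecidablePred p]
    (hc : (Finset.univ.filter p).card = 2) {m : V} (hm : p m) :
    ∃ o, o ≠ m ∧ Finset.univ.filter p = {m, o} := by
  obtain ⟨s, t, hst, h⟩ := Finset.card_eq_two.mp hc
  have hms : m ∈ ({s, t} : Finset V) := by rw [← h]; simp [hm]
  simp only [Finset.mem_insert, Finset.mem_singleton] at hms
  rcases hms with hh | hh
  · subst hh; exact ⟨t, Ne.symm hst, h⟩
  · subst hh; exact ⟨s, hst, by rw [h, Finset.pair_comm]⟩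

lemma main : ∀ (n : ℕ) (R V : Type) [Fintype R] [DecidableEq R] [Fintype V] [DecidableEq V],
    Fintype.card R = n → Fintype.card V = n →
    ∀ (Q : Matrix R V ℚ),
    (∀ r v, Q r v = 0 ∨ Q r v = 1) →
    (∀ r, (Finset.univ.filter (fun v => Q r v = 1)).card = 2) →
    (∀ z : V → ℚ, Q.mulVec z = 0 → z = 0) →
    ∀ (j : R) (x : V → ℚ), Q.mulVec x = Pi.single j 1 →
    ∀ v, x v ∈ ({0, 1/2, -(1/2), 1, -1} : Set ℚ) := by
  intro n
  induction n using Nat.strong_induction_on with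
  | _ n IH =>
  intro R V _ _ _ _ hR hV Q h01 hrow hker j x hx v
  -- unfold the linear system
  have hxr : ∀ r, ∑ c, Q r c * x c = if r = j then 1 else 0 := by
    intro r
    have := congrFun hx r
    simpa [Matrix.mulVec, dotProduct, Pi.single_apply] using this
  have hkerr : ∀ z : V → ℚ, (∀ r, ∑ c, Q r c * z c = 0) → ∀ c, z c = 0 := by
    intro z hz c
    have : z = 0 := hker z (by
      funext r
      simpa [Matrix.mulVec, dotProduct] using hz r)
    exact congrFun this c
  -- every column is nonempty
  have hdegpos : ∀ w, (Finset.univ.filter (fun r => Q r w = 1)).Nonempty := by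
    intro w
    by_contra hne
    rw [Finset.not_nonempty_iff_eq_empty] at hne
    have hz : ∀ r, Q r w = 0 := by
      intro r
      rcases h01 r w with h | h
      · exact h
      · have hm : r ∈ Finset.univ.filter (fun r => Q r w = 1) :=
          Finset.mem_filter.mpr ⟨Finset.mem_univ r, h⟩
        rw [hne] at hm
        exact absurd hm (Finset.notMem_empty r)
    have h10 := hkerr (fun c => if c = w then (1:ℚ) else 0) (by
      intro r
      apply Finset.sum_eq_zero
      intro c _
      by_cases hcw : c = w
      · simp [hcw, hz r]
      · simp [hcw]) w
    simp at h10
  -- CASE SPLIT: is there a column with exactly one 1?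
  by_cases hA : ∃ w i, Finset.univ.filter (fun r => Q r w = 1) = {i}
  · -- MOVE A : delete row i and column w
    obtain ⟨w, i, hwi⟩ := hA
    have hQiw : Q i w = 1 := by
      have hm : i ∈ Finset.univ.filter (fun r => Q r w = 1) := by
        rw [hwi]; exact Finset.mem_singleton_self i
      simpa using hm
    have hcolw : ∀ r, r ≠ i → Q r w = 0 := by
      intro r hr
      rcases h01 r w with h | h
      · exact h
      · have hm : r ∈ Finset.univ.filter (fun r => Q r w = 1) := by simp [h]
        rw [hwi] at hm
        exact absurd (Finset.mem_singleton.mp hm) hr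
    obtain ⟨p, q, hpq, hsuppiraw⟩ := Finset.card_eq_two.mp (hrow i)
    have hwpq : w ∈ ({p, q} : Finset V) := by
      rw [← hsuppiraw]; simp [hQiw]
    obtain ⟨u, huw, hsuppi⟩ : ∃ u, u ≠ w ∧
        Finset.univ.filter (fun c => Q i c = 1) = {w, u} := by
      simp only [Finset.mem_insert, Finset.mem_singleton] at hwpq
      rcases hwpq with h | h
      · subst h; exact ⟨q, Ne.symm hpq, hsuppiraw⟩
      · subst h; exact ⟨p, hpq, by rw [hsuppiraw, Finset.pair_comm]⟩
    have hQiu : Q i u = 1 := by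
      have hm : u ∈ Finset.univ.filter (fun c => Q i c = 1) := by rw [hsuppi]; simp
      simpa using hm
    have hwu : w ≠ u := Ne.symm huw
    have hn1 : 1 ≤ n := by
      have : 0 < Fintype.card V := Fintype.card_pos_iff.mpr ⟨w⟩
      omega
    -- the reduced matrix
    set V' := {c // c ∉ ({w} : Finset V)} with hV'def
    set R' := {r // r ∉ ({i} : Finset R)} with hR'def
    have humem : u ∉ ({w} : Finset V) := by simp [huw]
    set Q' : Matrix R' V' ℚ := fun r c => Q r.val c.val with hQ'def
    have hcardR' : Fintype.card R' = n - 1 := by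
      rw [card_subtype_not_mem, hR, Finset.card_singleton]
    have hcardV' : Fintype.card V' = n - 1 := by
      rw [card_subtype_not_mem, hV, Finset.card_singleton]
    have h01' : ∀ (r : R') (c : V'), Q' r c = 0 ∨ Q' r c = 1 := fun r c => h01 r.val c.val
    have hrow' : ∀ r : R', (Finset.univ.filter (fun c : V' => Q' r c = 1)).card = 2 := by
      intro r
      rw [card_filter_subtype V ({w} : Finset V) (fun c => Q r.val c = 1)
        (by intro c hc
            rw [Finset.mem_singleton] at hc
            subst hc
            simp [hcolw r.val (by simpa using r.prop)])]
      exact hrow r.val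
    have hzero_on : ∀ (r : R), r ≠ i → ∀ c ∈ ({w} : Finset V), Q r c = 0 := by
      intro r hr c hc
      rw [Finset.mem_singleton] at hc
      subst hc
      exact hcolw r hr
    have hker' : ∀ z : V' → ℚ, Q'.mulVec z = 0 → z = 0 := by
      intro z hz
      have hzr : ∀ r : R', ∑ c : V', Q' r c * z c = 0 := by
        intro r
        have := congrFun hz r
        simpa [Matrix.mulVec, dotProduct] using this
      set zext : V → ℚ := fun c =>
        if hc : c ∈ ({w} : Finset V) then -z ⟨u, humem⟩ else z ⟨c, hc⟩ with hzext
      have hagree : ∀ c : V', zext c.val = z c := by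
        intro c
        simp only [hzext, dif_neg c.prop, Subtype.coe_eta]
      have hext0 : ∀ c, zext c = 0 := by
        apply hkerr
        intro r
        by_cases hri : r = i
        · subst hri
          rw [rowsum_pair V (Q r) zext (h01 r) hwu hsuppi]
          have h1 : zext w = -z ⟨u, humem⟩ := by simp [hzext]
          have h2 : zext u = z ⟨u, humem⟩ := hagree ⟨u, humem⟩
          rw [h1, h2]; ring
        · rw [← subsum V ({w} : Finset V) (Q r) (hzero_on r hri) zext]
          have : ∀ c : V', Q r c.val * zext c.val = Q' ⟨r, by simp [hri]⟩ c * z c := by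
            intro c; rw [hagree c]
          rw [Finset.sum_congr rfl (fun c _ => this c)]
          exact hzr ⟨r, by simp [hri]⟩
      funext c
      rw [← hagree c]
      exact hext0 c.val
    -- row i equation
    have hrowi : x w + x u = (if i = j then 1 else 0) := by
      rw [← rowsum_pair V (Q i) x (h01 i) hwu hsuppi]
      exact hxr i
    by_cases hij : j = i
    · -- the deleted row is j : restricted system is homogeneous
      subst hij
      have hx'0 : (fun c : V' => x c.val) = 0 := by
        apply hker'
        funext r
        have hrj : r.val ≠ j := by simpa using r.prop
        have h2 : ∑ c : V', Q' r c * x c.val = ∑ c, Q r.val c * x c := by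
          exact subsum V ({w} : Finset V) (Q r.val) (hzero_on r.val hrj) x
        have h3 := hxr r.val
        rw [if_neg hrj] at h3
        simp only [Matrix.mulVec, dotProduct, Pi.zero_apply]
        rw [h2, h3]
      have hxu : x u = 0 := congrFun hx'0 ⟨u, humem⟩
      by_cases hvw : v = w
      · subst hvw
        rw [if_pos rfl, hxu, add_zero] at hrowi
        rw [hrowi]
        simp
      · have : x v = 0 := congrFun hx'0 ⟨v, by simp [hvw]⟩
        rw [this]; simp
    · -- j survives; apply induction hypothesis
      have hji : j ∉ ({i} : Finset R) := by simp [hij]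
      have hx' : Q'.mulVec (fun c : V' => x c.val) = Pi.single (⟨j, hji⟩ : R') 1 := by
        funext r
        have hrj : r.val ≠ i := by simpa using r.prop
        have h2 : ∑ c : V', Q' r c * x c.val = ∑ c, Q r.val c * x c :=
          subsum V ({w} : Finset V) (Q r.val) (hzero_on r.val hrj) x
        have h3 := hxr r.val
        simp only [Matrix.mulVec, dotProduct]
        rw [h2, h3, Pi.single_apply]
        congr 1
        simp [Subtype.ext_iff]
      have hS := IH (n-1) (by omega) R' V' hcardR' hcardV' Q' h01' hrow' hker'
        ⟨j, hji⟩ (fun c : V' => x c.val) hx'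
      by_cases hvw : v = w
      · subst hvw
        rw [if_neg (fun h => hij h.symm), ] at hrowi
        have hxu : x u ∈ ({0, 1/2, -(1/2), 1, -1} : Set ℚ) := hS ⟨u, humem⟩
        have : x v = -x u := by linarith
        rw [this]
        exact Sneg hxu
      · exact hS ⟨v, by simp [hvw]⟩
  · -- every column has exactly two 1 entries
    push_neg at hA
    have hdeg2 : ∀ w, (Finset.univ.filter (fun r => Q r w = 1)).card = 2 := by
      have hge : ∀ w, 2 ≤ (Finset.univ.filter (fun r => Q r w = 1)).card := by
        intro w
        have h1 : 0 < (Finset.univ.filter (fun r => Q r w = 1)).card :=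
          Finset.card_pos.mpr (hdegpos w)
        have h2 : (Finset.univ.filter (fun r => Q r w = 1)).card ≠ 1 := by
          intro h
          obtain ⟨i, hi⟩ := Finset.card_eq_one.mp h
          exact hA w i hi
        omega
      have hsum : ∑ w : V, (Finset.univ.filter (fun r => Q r w = 1)).card
          = ∑ r : R, (Finset.univ.filter (fun v => Q r v = 1)).card := by
        simp only [Finset.card_filter]
        exact Finset.sum_comm
      have hsum2 : ∑ r : R, (Finset.univ.filter (fun v => Q r v = 1)).card = 2 * n := by
        rw [Finset.sum_congr rfl (fun r _ => hrow r), Finset.sum_const, Finset.card_univ, hR]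
        ring
      intro w0
      by_contra hne
      have h3 : 2 < (Finset.univ.filter (fun r => Q r w0 = 1)).card := by
        have := hge w0; omega
      have hlt : ∑ w : V, 2 < ∑ w : V, (Finset.univ.filter (fun r => Q r w = 1)).card :=
        Finset.sum_lt_sum (fun i _ => hge i) ⟨w0, Finset.mem_univ w0, h3⟩
      rw [hsum, hsum2, Finset.sum_const, Finset.card_univ, hV] at hlt
      simp only [smul_eq_mul] at hlt
      omega
    have hn1 : 1 ≤ n := by
      have : 0 < Fintype.card V := Fintype.card_pos_iff.mpr ⟨v⟩
      omega
    have colsum : ∀ c, ∑ r : R, Q r c = 2 := by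
      intro c
      have h1 : ∑ r : R, Q r c = ∑ r : R, (if Q r c = 1 then (1:ℚ) else 0) := by
        apply Finset.sum_congr rfl
        intro r _
        rcases h01 r c with h | h <;> simp [h]
      rw [h1, Finset.sum_boole, hdeg2 c]
      norm_num
    obtain ⟨a0, b0, hab0, hsuppj⟩ := Finset.card_eq_two.mp (hrow j)
    by_cases he2 : ∃ e2, Q e2 a0 = 0 ∧ Q e2 b0 = 0
    · -- there is a row e2 = {b,c} disjoint from row j = {a0,b0}
      obtain ⟨e2, he2a, he2b⟩ := he2
      obtain ⟨b, c, hbc, hsupp2⟩ := Finset.card_eq_two.mp (hrow e2)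
      have hQ2b : Q e2 b = 1 := by
        have : b ∈ Finset.univ.filter (fun w => Q e2 w = 1) := by rw [hsupp2]; simp
        simpa using this
      have hQ2c : Q e2 c = 1 := by
        have : c ∈ Finset.univ.filter (fun w => Q e2 w = 1) := by rw [hsupp2]; simp
        simpa using this
      have hQja : Q j a0 = 1 := by
        have : a0 ∈ Finset.univ.filter (fun w => Q j w = 1) := by rw [hsuppj]; simp
        simpa using this
      have hQjb0 : Q j b0 = 1 := by
        have : b0 ∈ Finset.univ.filter (fun w => Q j w = 1) := by rw [hsuppj]; simp
        simpa using this
      have hbnot : b ≠ a0 ∧ b ≠ b0 := by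
        constructor <;> intro h <;> rw [h] at hQ2b
        · rw [he2a] at hQ2b; norm_num at hQ2b
        · rw [he2b] at hQ2b; norm_num at hQ2b
      have hcnot : c ≠ a0 ∧ c ≠ b0 := by
        constructor <;> intro h <;> rw [h] at hQ2c
        · rw [he2a] at hQ2c; norm_num at hQ2c
        · rw [he2b] at hQ2c; norm_num at hQ2c
      have hQjb : Q j b = 0 := by
        rcases h01 j b with h | h
        · exact h
        · have : b ∈ Finset.univ.filter (fun w => Q j w = 1) := by simp [h]
          rw [hsuppj] at this
          simp only [Finset.mem_insert, Finset.mem_singleton] at this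
          rcases this with h' | h'
          · exact absurd h' hbnot.1
          · exact absurd h' hbnot.2
      have hQjc : Q j c = 0 := by
        rcases h01 j c with h | h
        · exact h
        · have : c ∈ Finset.univ.filter (fun w => Q j w = 1) := by simp [h]
          rw [hsuppj] at this
          simp only [Finset.mem_insert, Finset.mem_singleton] at this
          rcases this with h' | h'
          · exact absurd h' hcnot.1
          · exact absurd h' hcnot.2
      -- the other edge e1 at b, e3 at c
      obtain ⟨e1, h12, hedgesb⟩ := pair_other R (fun r => Q r b = 1) (hdeg2 b) hQ2b
      obtain ⟨e3, h32, hedgesc⟩ := pair_other R (fun r => Q r c = 1) (hdeg2 c) hQ2c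
      have hQ1b : Q e1 b = 1 := by
        have : e1 ∈ Finset.univ.filter (fun r => Q r b = 1) := by rw [hedgesb]; simp
        simpa using this
      have hQ3c : Q e3 c = 1 := by
        have : e3 ∈ Finset.univ.filter (fun r => Q r c = 1) := by rw [hedgesc]; simp
        simpa using this
      have hje1 : j ≠ e1 := fun h => by rw [← h] at hQ1b; rw [hQjb] at hQ1b; norm_num at hQ1b
      have hje2 : j ≠ e2 := fun h => by rw [← h] at hQ2b; rw [hQjb] at hQ2b; norm_num at hQ2b
      have hje3 : j ≠ e3 := fun h => by rw [← h] at hQ3c; rw [hQjc] at hQ3c; norm_num at hQ3c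
      -- other endpoints a of e1, d of e3
      obtain ⟨a, hab', hsupp1⟩ := pair_other V (fun w => Q e1 w = 1) (hrow e1) hQ1b
      obtain ⟨d, hdc', hsupp3⟩ := pair_other V (fun w => Q e3 w = 1) (hrow e3) hQ3c
      have hab : a ≠ b := hab'
      have hdc : d ≠ c := hdc'
      have hQ1a : Q e1 a = 1 := by
        have : a ∈ Finset.univ.filter (fun w => Q e1 w = 1) := by rw [hsupp1]; simp
        simpa using this
      have hQ3d : Q e3 d = 1 := by
        have : d ∈ Finset.univ.filter (fun w => Q e3 w = 1) := by rw [hsupp3]; simp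
        simpa using this
      by_cases h13 : e1 = e3
      · -- degenerate : rows e1 and e2 both have support {b, c} : kernel vector
        have hQ1c : Q e1 c = 1 := by rw [h13]; exact hQ3c
        have hac : a = c := by
          have : c ∈ Finset.univ.filter (fun w => Q e1 w = 1) := by simp [hQ1c]
          rw [hsupp1] at this
          simp only [Finset.mem_insert, Finset.mem_singleton] at this
          rcases this with h' | h'
          · exact absurd h'.symm hbc
          · exact h'.symm
        have hz := hkerr (fun w => if w = b then (1:ℚ) else if w = c then -1 else 0) ?_ b
        · simp at hz
        · intro r
          by_cases hr1 : r = e1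
          · subst hr1
            rw [rowsum_pair V (Q r) _ (h01 r) (Ne.symm hab) hsupp1, hac]
            simp [hbc, Ne.symm hbc]
          · by_cases hr2 : r = e2
            · subst hr2
              rw [rowsum_pair V (Q r) _ (h01 r) hbc hsupp2]
              simp [hbc, Ne.symm hbc]
            · rw [rowsum V (Q r) _ (h01 r)]
              apply Finset.sum_eq_zero
              intro w hw
              simp only [Finset.mem_filter, Finset.mem_univ, true_and] at hw
              have hwb : w ≠ b := by
                intro h; subst h
                have : r ∈ Finset.univ.filter (fun r => Q r w = 1) := by simp [hw]
                rw [hedgesb] at this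
                simp only [Finset.mem_insert, Finset.mem_singleton] at this
                tauto
              have hwc : w ≠ c := by
                intro h; subst h
                have : r ∈ Finset.univ.filter (fun r => Q r w = 1) := by simp [hw]
                rw [hedgesc] at this
                simp only [Finset.mem_insert, Finset.mem_singleton] at this
                rcases this with h' | h'
                · exact hr2 h'
                · rw [← h13] at h'; exact hr1 h'
              simp [hwb, hwc]
      · -- e1 ≠ e3
        have hac : a ≠ c := by
          intro h
          rw [h] at hQ1a
          have : e1 ∈ Finset.univ.filter (fun r => Q r c = 1) := by simp [hQ1a]
          rw [hedgesc] at this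
          simp only [Finset.mem_insert, Finset.mem_singleton] at this
          rcases this with h' | h'
          · exact h12 h'
          · exact h13 h'
        have hdb : d ≠ b := by
          intro h
          rw [h] at hQ3d
          have : e3 ∈ Finset.univ.filter (fun r => Q r b = 1) := by simp [hQ3d]
          rw [hedgesb] at this
          simp only [Finset.mem_insert, Finset.mem_singleton] at this
          rcases this with h' | h'
          · exact h32 h'
          · exact h13 h'.symm
        -- the three equations
        have heq1 : x b + x a = 0 := by
          rw [← rowsum_pair V (Q e1) x (h01 e1) (Ne.symm hab) hsupp1, hxr e1,
            if_neg (Ne.symm hje1)]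
        have heq2 : x b + x c = 0 := by
          rw [← rowsum_pair V (Q e2) x (h01 e2) hbc hsupp2, hxr e2, if_neg (Ne.symm hje2)]
        have heq3 : x c + x d = 0 := by
          rw [← rowsum_pair V (Q e3) x (h01 e3) (Ne.symm hdc) hsupp3, hxr e3,
            if_neg (Ne.symm hje3)]
        by_cases had : a = d
        · -- MOVE C : triangle component {a,b,c} with rows {e1,e2,e3}
          have he3a : Q e3 a = 1 := by rw [had]; exact hQ3d
          have hedgesa : Finset.univ.filter (fun r => Q r a = 1) = {e1, e3} := by
            apply (Finset.eq_of_subset_of_card_le _ _).symm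
            · intro r hr
              simp only [Finset.mem_insert, Finset.mem_singleton] at hr
              rcases hr with h | h <;> subst h <;> simp [hQ1a, he3a]
            · rw [hdeg2 a, Finset.card_pair h13]
          have heq3' : x c + x a = 0 := by rw [had]; exact heq3
          have hxa : x a = 0 := by linarith
          have hxb : x b = 0 := by linarith
          have hxc : x c = 0 := by linarith
          set sV : Finset V := {a, b, c} with hsVdef
          set sR : Finset R := {e1, e2, e3} with hsRdef
          have hcardsV : sV.card = 3 := by
            rw [hsVdef, Finset.card_insert_of_notMem (by simp [hab, hac]),
              Finset.card_pair hbc]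
          have hcardsR : sR.card = 3 := by
            rw [hsRdef, Finset.card_insert_of_notMem (by simp [h12, h13]),
              Finset.card_pair (Ne.symm h32)]
          have havoid : ∀ r : R, r ∉ sR → ∀ w ∈ sV, Q r w = 0 := by
            intro r hr w hw
            simp only [hsRdef, Finset.mem_insert, Finset.mem_singleton, not_or] at hr
            simp only [hsVdef, Finset.mem_insert, Finset.mem_singleton] at hw
            rcases h01 r w with h | h
            · exact h
            · exfalso
              rcases hw with h' | h' | h'
              · rw [h'] at h
                have hm : r ∈ Finset.univ.filter (fun r => Q r a = 1) := by simp [h]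
                rw [hedgesa] at hm
                simp only [Finset.mem_insert, Finset.mem_singleton] at hm
                tauto
              · rw [h'] at h
                have hm : r ∈ Finset.univ.filter (fun r => Q r b = 1) := by simp [h]
                rw [hedgesb] at hm
                simp only [Finset.mem_insert, Finset.mem_singleton] at hm
                tauto
              · rw [h'] at h
                have hm : r ∈ Finset.univ.filter (fun r => Q r c = 1) := by simp [h]
                rw [hedgesc] at hm
                simp only [Finset.mem_insert, Finset.mem_singleton] at hm
                tauto
          have hcardR' : Fintype.card {r // r ∉ sR} = n - 3 := by
            rw [card_subtype_not_mem, hR, hcardsR]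
          have hcardV' : Fintype.card {w // w ∉ sV} = n - 3 := by
            rw [card_subtype_not_mem, hV, hcardsV]
          set Q' : Matrix {r // r ∉ sR} {w // w ∉ sV} ℚ := fun r w => Q r.val w.val with hQ'def
          have h01' : ∀ r w, Q' r w = 0 ∨ Q' r w = 1 := fun r w => h01 r.val w.val
          have hrow' : ∀ r, (Finset.univ.filter (fun w : {w // w ∉ sV} => Q' r w = 1)).card = 2 := by
            intro r
            rw [card_filter_subtype V sV (fun w => Q r.val w = 1)
              (fun w hw => by simp [havoid r.val r.prop w hw])]
            exact hrow r.val
          have hamem : a ∈ sV := by simp [hsVdef]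
          have hbmem : b ∈ sV := by simp [hsVdef]
          have hcmem : c ∈ sV := by simp [hsVdef]
          have hdmem : d ∈ sV := by rw [← had]; exact hamem
          have hker' : ∀ z : {w // w ∉ sV} → ℚ, Q'.mulVec z = 0 → z = 0 := by
            intro z hz
            have hzr : ∀ r : {r // r ∉ sR}, ∑ w : {w // w ∉ sV}, Q' r w * z w = 0 := by
              intro r
              have := congrFun hz r
              simpa [Matrix.mulVec, dotProduct] using this
            set zext : V → ℚ := fun w => if hw : w ∈ sV then 0 else z ⟨w, hw⟩ with hzext
            have hagree : ∀ w : {w // w ∉ sV}, zext w.val = z w := fun w => dif_neg w.prop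
            have hext0 : ∀ w, zext w = 0 := by
              apply hkerr
              intro r
              by_cases hr1 : r = e1
              · subst hr1
                rw [rowsum_pair V (Q r) zext (h01 r) (Ne.symm hab) hsupp1,
                  show zext b = 0 from dif_pos hbmem, show zext a = 0 from dif_pos hamem]
                ring
              · by_cases hr2 : r = e2
                · subst hr2
                  rw [rowsum_pair V (Q r) zext (h01 r) hbc hsupp2,
                    show zext b = 0 from dif_pos hbmem, show zext c = 0 from dif_pos hcmem]
                  ring
                · by_cases hr3 : r = e3
                  · subst hr3
                    rw [rowsum_pair V (Q r) zext (h01 r) (Ne.symm hdc) hsupp3,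
                      show zext c = 0 from dif_pos hcmem, show zext d = 0 from dif_pos hdmem]
                    ring
                  · have hrmem : r ∉ sR := by simp [hsRdef, hr1, hr2, hr3]
                    rw [← subsum V sV (Q r) (havoid r hrmem) zext,
                      Finset.sum_congr rfl (fun w _ => by rw [hagree w])]
                    exact hzr ⟨r, hrmem⟩
            funext w
            rw [← hagree w]
            exact hext0 w.val
          have hjmem : j ∉ sR := by simp [hsRdef, hje1, hje2, hje3]
          have hx' : Q'.mulVec (fun w : {w // w ∉ sV} => x w.val)
              = Pi.single (⟨j, hjmem⟩ : {r // r ∉ sR}) 1 := by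
            funext r
            have h2 : ∑ w : {w // w ∉ sV}, Q r.val w.val * x w.val = ∑ w, Q r.val w * x w :=
              subsum V sV (Q r.val) (havoid r.val r.prop) x
            simp only [Matrix.mulVec, dotProduct]
            rw [h2, hxr r.val, Pi.single_apply]
            congr 1
            simp [Subtype.ext_iff]
          have hS := IH (n-3) (by omega) _ _ hcardR' hcardV' Q' h01' hrow' hker'
            ⟨j, hjmem⟩ _ hx'
          by_cases hva : v = a
          · subst hva; rw [hxa]; simp
          · by_cases hvb : v = b
            · subst hvb; rw [hxb]; simp
            · by_cases hvc : v = c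
              · subst hvc; rw [hxc]; simp
              · exact hS ⟨v, by simp [hsVdef, hva, hvb, hvc]⟩
        · -- MOVE B : contract path, delete rows {e2,e3} and columns {b,c}
          set sV : Finset V := {b, c} with hsVdef
          set sR : Finset R := {e2, e3} with hsRdef
          rw [hsRdef] at hedgesc
          rw [hsVdef] at hsupp2
          have hcardsV : sV.card = 2 := by rw [hsVdef]; exact Finset.card_pair hbc
          have hcardsR : sR.card = 2 := by rw [hsRdef]; exact Finset.card_pair (Ne.symm h32)
          have hbmem' : b ∈ sV := by simp [hsVdef]
          have hcmem' : c ∈ sV := by simp [hsVdef]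
          have hanot : a ∉ sV := by simp [hsVdef, hab, hac]
          have hdnot : d ∉ sV := by simp [hsVdef, hdb, hdc]
          have he1not : e1 ∉ sR := by simp [hsRdef, h12, h13]
          have hjnot : j ∉ sR := by simp [hsRdef, hje2, hje3]
          have havoid : ∀ r : R, r ≠ e1 → r ∉ sR → ∀ w ∈ sV, Q r w = 0 := by
            intro r hr1 hr w hw
            simp only [hsRdef, Finset.mem_insert, Finset.mem_singleton, not_or] at hr
            simp only [hsVdef, Finset.mem_insert, Finset.mem_singleton] at hw
            rcases h01 r w with h | h
            · exact h
            · exfalso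
              rcases hw with h' | h'
              · rw [h'] at h
                have hm : r ∈ Finset.univ.filter (fun r => Q r b = 1) := by simp [h]
                rw [hedgesb] at hm
                simp only [Finset.mem_insert, Finset.mem_singleton] at hm
                tauto
              · rw [h'] at h
                have hm : r ∈ Finset.univ.filter (fun r => Q r c = 1) := by simp [h]
                rw [hedgesc] at hm
                simp only [Finset.mem_insert, Finset.mem_singleton] at hm
                tauto
          have hcardR' : Fintype.card {r // r ∉ sR} = n - 2 := by
            rw [card_subtype_not_mem, hR, hcardsR]
          have hcardV' : Fintype.card {w // w ∉ sV} = n - 2 := by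
            rw [card_subtype_not_mem, hV, hcardsV]
          set Q' : Matrix {r // r ∉ sR} {w // w ∉ sV} ℚ :=
            fun r w => if r.val = e1 then (if w.val = a ∨ w.val = d then 1 else 0)
              else Q r.val w.val with hQ'def
          have h01' : ∀ r w, Q' r w = 0 ∨ Q' r w = 1 := by
            intro r w
            by_cases h1 : r.val = e1
            · by_cases h2 : w.val = a ∨ w.val = d <;> simp [hQ'def, h1, h2]
            · simp only [hQ'def, if_neg h1]
              exact h01 r.val w.val
          have hsupp1' : Finset.univ.filter (fun w : {w // w ∉ sV} => Q' ⟨e1, he1not⟩ w = 1)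
              = {⟨a, hanot⟩, ⟨d, hdnot⟩} := by
            ext w
            simp only [Finset.mem_filter, Finset.mem_univ, true_and, hQ'def,
              Finset.mem_insert, Finset.mem_singleton, if_pos rfl]
            constructor
            · intro h
              by_cases h2 : w.val = a ∨ w.val = d
              · rcases h2 with h2 | h2
                · left; exact Subtype.ext h2
                · right; exact Subtype.ext h2
              · rw [if_neg h2] at h; norm_num at h
            · rintro (h | h) <;> rw [h] <;> simp
          have hadne : (⟨a, hanot⟩ : {w // w ∉ sV}) ≠ ⟨d, hdnot⟩ :=
            fun h => had (congrArg Subtype.val h)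
          have hrow' : ∀ r, (Finset.univ.filter (fun w : {w // w ∉ sV} => Q' r w = 1)).card = 2 := by
            intro r
            by_cases h1 : r.val = e1
            · have hre : r = ⟨e1, he1not⟩ := Subtype.ext h1
              rw [hre, hsupp1', Finset.card_pair hadne]
            · have heq : Finset.univ.filter (fun w : {w // w ∉ sV} => Q' r w = 1)
                  = Finset.univ.filter (fun w : {w // w ∉ sV} => Q r.val w.val = 1) := by
                apply Finset.filter_congr
                intro w _
                simp [hQ'def, h1]
              rw [heq, card_filter_subtype V sV (fun w => Q r.val w = 1)
                (fun w hw => by simp [havoid r.val h1 r.prop w hw])]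
              exact hrow r.val
          have hker' : ∀ z : {w // w ∉ sV} → ℚ, Q'.mulVec z = 0 → z = 0 := by
            intro z hz
            have hzr : ∀ r : {r // r ∉ sR}, ∑ w : {w // w ∉ sV}, Q' r w * z w = 0 := by
              intro r
              have := congrFun hz r
              simpa [Matrix.mulVec, dotProduct] using this
            have hre1 : z ⟨a, hanot⟩ + z ⟨d, hdnot⟩ = 0 := by
              have h0 := hzr ⟨e1, he1not⟩
              rw [rowsum_pair {w // w ∉ sV} (fun w => Q' ⟨e1, he1not⟩ w) z (h01' _)
                hadne hsupp1'] at h0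
              exact h0
            set A := z ⟨a, hanot⟩ with hAdef
            set zext : V → ℚ := fun w =>
              if hw : w ∈ sV then (if w = b then -A else A) else z ⟨w, hw⟩ with hzext
            have hagree : ∀ w : {w // w ∉ sV}, zext w.val = z w := fun w => dif_neg w.prop
            have hzb : zext b = -A := by simp [hzext, hbmem']
            have hzc : zext c = A := by simp [hzext, hcmem', Ne.symm hbc]
            have hza : zext a = A := by simp [hzext, hanot, hAdef]
            have hzd : zext d = z ⟨d, hdnot⟩ := by simp [hzext, hdnot]
            have hext0 : ∀ w, zext w = 0 := by
              apply hkerr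
              intro r
              by_cases hr1 : r = e1
              · subst hr1
                rw [rowsum_pair V (Q r) zext (h01 r) (Ne.symm hab) hsupp1, hzb, hza]
                ring
              · by_cases hr2 : r = e2
                · subst hr2
                  rw [rowsum_pair V (Q r) zext (h01 r) hbc hsupp2, hzb, hzc]
                  ring
                · by_cases hr3 : r = e3
                  · subst hr3
                    rw [rowsum_pair V (Q r) zext (h01 r) (Ne.symm hdc) hsupp3, hzc, hzd]
                    linarith [hre1]
                  · have hrmem : r ∉ sR := by simp [hsRdef, hr2, hr3]
                    rw [← subsum V sV (Q r) (havoid r hr1 hrmem) zext]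
                    have hterm : ∀ w : {w // w ∉ sV},
                        Q r w.val * zext w.val = Q' ⟨r, hrmem⟩ w * z w := by
                      intro w
                      rw [hagree w]
                      congr 1
                      simp [hQ'def, hr1]
                    rw [Finset.sum_congr rfl (fun w _ => hterm w)]
                    exact hzr ⟨r, hrmem⟩
            funext w
            rw [← hagree w]
            exact hext0 w.val
          have hxad : x a + x d = 0 := by linarith
          have hx' : Q'.mulVec (fun w : {w // w ∉ sV} => x w.val)
              = Pi.single (⟨j, hjnot⟩ : {r // r ∉ sR}) 1 := by
            funext r
            simp only [Matrix.mulVec, dotProduct]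
            by_cases hr1 : r.val = e1
            · have hre : r = ⟨e1, he1not⟩ := Subtype.ext hr1
              rw [hre]
              rw [rowsum_pair {w // w ∉ sV} (fun w => Q' ⟨e1, he1not⟩ w) _ (h01' _)
                hadne hsupp1']
              rw [Pi.single_apply,
                if_neg (show (⟨e1, he1not⟩ : {r // r ∉ sR}) ≠ ⟨j, hjnot⟩ from
                  fun h => hje1 (congrArg Subtype.val h).symm)]
              exact hxad
            · have h2 : ∑ w : {w // w ∉ sV}, Q' r w * x w.val = ∑ w, Q r.val w * x w := by
                rw [← subsum V sV (Q r.val) (havoid r.val hr1 r.prop) x]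
                apply Finset.sum_congr rfl
                intro w _
                congr 1
                simp [hQ'def, hr1]
              rw [h2, hxr r.val, Pi.single_apply]
              congr 1
              simp [Subtype.ext_iff]
          have hS := IH (n-2) (by omega) _ _ hcardR' hcardV' Q' h01' hrow' hker'
            ⟨j, hjnot⟩ _ hx'
          have hxaS := hS ⟨a, hanot⟩
          by_cases hvb : v = b
          · subst hvb
            have hxv : x v = -x a := by linarith
            rw [hxv]
            exact Sneg hxaS
          · by_cases hvc : v = c
            · subst hvc
              have hxv : x v = x a := by linarith
              rw [hxv]
              exact hxaS
            · exact hS ⟨v, by simp [hsVdef, hvb, hvc]⟩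
    · -- no row avoids {a0, b0} : then n ≤ 3, small cases
      push_neg at he2
      have hmeet : ∀ r : R, Q r a0 = 1 ∨ Q r b0 = 1 := by
        intro r
        rcases h01 r a0 with h | h
        · rcases h01 r b0 with h' | h'
          · exact absurd h' (he2 r h)
          · exact Or.inr h'
        · exact Or.inl h
      have hn3 : n ≤ 3 := by
        have hcover : (Finset.univ : Finset R) ⊆
            (Finset.univ.filter (fun r => Q r a0 = 1)) ∪ (Finset.univ.filter (fun r => Q r b0 = 1)) := by
          intro r _
          rcases hmeet r with h | h
          · exact Finset.mem_union_left _ (by simp [h])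
          · exact Finset.mem_union_right _ (by simp [h])
        have hj2 : j ∈ (Finset.univ.filter (fun r => Q r a0 = 1)) ∩ (Finset.univ.filter (fun r => Q r b0 = 1)) := by
          have ha : Q j a0 = 1 := by
            have : a0 ∈ Finset.univ.filter (fun v => Q j v = 1) := by rw [hsuppj]; simp
            simpa using this
          have hb : Q j b0 = 1 := by
            have : b0 ∈ Finset.univ.filter (fun v => Q j v = 1) := by rw [hsuppj]; simp
            simpa using this
          simp [ha, hb]
        have h4 := Finset.card_union_add_card_inter
          (Finset.univ.filter (fun r => Q r a0 = 1)) (Finset.univ.filter (fun r => Q r b0 = 1))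
        have h5 : n ≤ (Finset.univ.filter (fun r => Q r a0 = 1) ∪ Finset.univ.filter (fun r => Q r b0 = 1)).card := by
          rw [← hR, ← Finset.card_univ]
          exact Finset.card_le_card hcover
        have h6 : 1 ≤ (Finset.univ.filter (fun r => Q r a0 = 1) ∩ Finset.univ.filter (fun r => Q r b0 = 1)).card :=
          Finset.card_pos.mpr ⟨j, hj2⟩
        rw [hdeg2 a0, hdeg2 b0] at h4
        omega
      -- n = 1 impossible
      have hn1' : n ≠ 1 := by
        intro h
        have := Finset.card_filter_le (Finset.univ : Finset V) (fun v => Q j v = 1)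
        rw [hrow j, Finset.card_univ, hV, h] at this
        omega
      -- n = 2 impossible
      have hn2' : n ≠ 2 := by
        intro h
        obtain ⟨v1, v2, hv12⟩ := Fintype.exists_pair_of_one_lt_card (by omega : 1 < Fintype.card V)
        have huniv : (Finset.univ : Finset V) = {v1, v2} := by
          apply (Finset.eq_of_subset_of_card_le (Finset.subset_univ {v1, v2}) _).symm
          rw [Finset.card_univ, hV, h, Finset.card_pair hv12]
        have hfull : ∀ r : R, Finset.univ.filter (fun v => Q r v = 1) = Finset.univ := by
          intro r
          apply Finset.eq_of_subset_of_card_le (Finset.filter_subset _ _)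
          rw [Finset.card_univ, hV, h, hrow r]
        have hz := hkerr (fun c => if c = v1 then (1:ℚ) else -1) ?_ v1
        · simp at hz
        · intro r
          rw [rowsum V (Q r) _ (h01 r), hfull r, huniv, Finset.sum_pair hv12]
          simp [hv12, Ne.symm hv12]
      -- n = 3 : direct computation
      have hn3' : n = 3 := by omega
      have hsumx : ∑ c : V, x c = 1/2 := by
        have h1 : ∑ r : R, (∑ c : V, Q r c * x c) = 1 := by
          rw [Finset.sum_congr rfl (fun r _ => hxr r)]
          simp
        rw [Finset.sum_comm] at h1
        have h2 : ∀ c : V, ∑ r : R, Q r c * x c = 2 * x c := by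
          intro c
          rw [← Finset.sum_mul, colsum c]
        rw [Finset.sum_congr rfl (fun c _ => h2 c), ← Finset.mul_sum] at h1
        linarith
      obtain ⟨f, hf⟩ : ∃ f, Q f v = 0 := by
        by_contra hc
        push_neg at hc
        have hfull : Finset.univ.filter (fun r => Q r v = 1) = Finset.univ := by
          apply Finset.filter_true_of_mem
          intro r _
          rcases h01 r v with h | h
          · exact absurd h (hc r)
          · exact h
        have := hdeg2 v
        rw [hfull, Finset.card_univ, hR, hn3'] at this
        omega
      have hsuppf : Finset.univ.filter (fun c => Q f c = 1) = Finset.univ.erase v := by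
        apply Finset.eq_of_subset_of_card_le
        · intro c hc
          simp only [Finset.mem_filter] at hc
          apply Finset.mem_erase.mpr
          refine ⟨?_, Finset.mem_univ c⟩
          intro hcv
          rw [hcv, hf] at hc
          norm_num at hc
        · rw [Finset.card_erase_of_mem (Finset.mem_univ v), Finset.card_univ, hV, hn3', hrow f]
      have hrowf : ∑ c, Q f c * x c = 1/2 - x v := by
        rw [rowsum V (Q f) x (h01 f), hsuppf]
        have := Finset.sum_erase_add Finset.univ x (Finset.mem_univ v)
        rw [hsumx] at this
        linarith
      have := hxr f
      rw [hrowf] at this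
      simp only [Set.mem_insert_iff, Set.mem_singleton_iff]
      by_cases hfj : f = j
      · rw [if_pos hfj] at this
        right; right; left
        linarith
      · rw [if_neg hfj] at this
        right; left
        linarith

theorem stmt8 (M : ℕ) (Q : Matrix (Fin M) (Fin M) ℚ)
    (h01 : ∀ i j, Q i j = 0 ∨ Q i j = 1)
    (hdet : IsUnit Q.det)
    (hrow : ∀ i, (Finset.univ.filter (fun j => Q i j = 1)).card = 2) :
    ∀ i j, Q⁻¹ i j ∈ ({0, 1/2, -(1/2), 1, -1} : Set ℚ) := by
  intro i j
  have hker : ∀ z : Fin M → ℚ, Q.mulVec z = 0 → z = 0 := by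
    intro z hz
    have h1 : Q⁻¹ * Q = 1 := Matrix.nonsing_inv_mul Q hdet
    calc z = (Q⁻¹ * Q).mulVec z := by rw [h1]; simp [Matrix.one_mulVec]
    _ = Q⁻¹.mulVec (Q.mulVec z) := by rw [Matrix.mulVec_mulVec]
    _ = 0 := by rw [hz]; simp
  have hx : Q.mulVec (fun i => Q⁻¹ i j) = Pi.single j 1 := by
    funext k
    have h1 : Q * Q⁻¹ = 1 := Matrix.mul_nonsing_inv Q hdet
    have := congrFun (congrFun h1 k) j
    simp only [Matrix.mul_apply] at this
    simp [Matrix.mulVec, dotProduct, this, Matrix.one_apply, Pi.single_apply]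
  exact main M (Fin M) (Fin M) (by simp) (by simp) Q h01 hrow hker j _ hx i
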